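/- Let p > 0 be a real number such that 2p is not an integer. Then the two functions J_p(x) = (x^p / (2^p Γ(1+p))) ∑_{n=0}^∞ (−1)ⁿ x²ⁿ / (2²ⁿ (1+p)_n n!) and J_{−p}(x) = (x^{−p} / (2^{−p} Γ(1−p))) ∑_{n=0}^∞ (−1)ⁿ x²ⁿ / (2²ⁿ (1−p)_n n!) are well defined and twice differentiable on (0,∞), each satisfies Bessel's equation of order p, x² y''(x) + x y'(x) + (x² − p²) y(x) = 0, for all x > 0, and J_p and J_{−p} are linearly independent over ℝ as functions on (0,∞). -/

import Mathlib

/-- The Pochhammer symbol (ascending factorial) `(k)ₙ = k(k+1)⋯(k+n−1)`, `(k)₀ = 1`. -/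
noncomputable def poch (k : ℝ) (n : ℕ) : ℝ := ∏ i ∈ Finset.range n, (k + i)

/-- The Bessel function of order `p`,
`J_p(x) = (x^p / (2^p Γ(1+p))) ∑ (−1)ⁿ x²ⁿ / (2²ⁿ (1+p)ₙ n!)` (for `x > 0`). -/
noncomputable def besselJ (p : ℝ) (x : ℝ) : ℝ :=
  (x ^ p / ((2 : ℝ) ^ p * Real.Gamma (1 + p))) *
    ∑' n : ℕ, (-1 : ℝ) ^ n * x ^ (2 * n) /
      (2 ^ (2 * n) * poch (1 + p) n * (n.factorial : ℝ))

namespace BJ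
open Filter Topology

noncomputable def a (q : ℝ) (n : ℕ) : ℝ := (-1)^n / (4^n * poch (1+q) n * (n.factorial : ℝ))

lemma poch_succ (k : ℝ) (n : ℕ) : poch k (n+1) = poch k n * (k + n) := Finset.prod_range_succ _ _

def OK (q : ℝ) : Prop := ∀ i : ℕ, 1 + q + (i : ℝ) ≠ 0

lemma poch_ne_zero {q : ℝ} (hq : OK q) (n : ℕ) : poch (1+q) n ≠ 0 :=
  Finset.prod_ne_zero_iff.2 fun i _ => hq i

lemma a_recur {q : ℝ} (hq : OK q) (n : ℕ) :
    a q (n+1) * (4 * ((n:ℝ)+1) * (1+q+n)) = - a q n := by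
  have h1 : poch (1+q) (n+1) = poch (1+q) n * (1+q+n) := poch_succ _ _
  have h2 : ((n+1).factorial : ℝ) = ((n:ℝ)+1) * (n.factorial : ℝ) := by
    rw [Nat.factorial_succ]; push_cast; ring
  have hp := poch_ne_zero hq n
  have hf : (n.factorial : ℝ) ≠ 0 := Nat.cast_ne_zero.2 n.factorial_ne_zero
  have hn1 : ((n:ℝ)+1) ≠ 0 := by positivity
  have h4 : (4:ℝ)^n ≠ 0 := by positivity
  have hqn := hq n
  unfold a
  rw [h1, h2, pow_succ, pow_succ]
  field_simp

lemma a_abs_succ {q : ℝ} (hq : OK q) (m : ℕ) (hpos : 0 < 1+q+(m:ℝ)) :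
    |a q (m+1)| = |a q m| / (4 * ((m:ℝ)+1) * (1+q+m)) := by
  have h := a_recur hq m
  have hd : (0:ℝ) < 4 * ((m:ℝ)+1) * (1+q+m) := by positivity
  rw [eq_div_iff hd.ne', ← abs_of_pos hd, ← abs_mul, h, abs_neg]

lemma summable_master {q : ℝ} (hq : OK q) (j d : ℕ) {R : ℝ} (hR : 1 ≤ R) :
    Summable (fun n : ℕ => ((n:ℝ)+1)^d * |a q (n+j)| * R^n) := by
  apply summable_of_ratio_norm_eventually_le (r := 1/2) (by norm_num)
  obtain ⟨N₁, hN₁⟩ := exists_nat_ge (-q)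
  obtain ⟨N₂, hN₂⟩ := exists_nat_ge ((2:ℝ)^d * R / 2)
  filter_upwards [eventually_ge_atTop N₁, eventually_ge_atTop (N₂+1)] with n hn1 hn2
  have hn1' : (N₁:ℝ) ≤ n := Nat.cast_le.2 hn1
  have hn2' : ((N₂:ℝ)+1) ≤ n := by exact_mod_cast Nat.cast_le.2 hn2
  have hN1q : -q ≤ (N₁:ℝ) := hN₁
  have hj : (0:ℝ) ≤ (j:ℝ) := Nat.cast_nonneg j
  set m : ℕ := n + j with hm
  have hmcast : ((m:ℕ):ℝ) = (n:ℝ) + (j:ℝ) := by push_cast [hm]; ring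
  have hge1 : (1:ℝ) ≤ 1 + q + (m:ℝ) := by rw [hmcast]; nlinarith
  have hpos : (0:ℝ) < 1 + q + (m:ℝ) := by linarith
  have habs : |a q (m+1)| = |a q m| / (4 * ((m:ℝ)+1) * (1+q+(m:ℝ))) := a_abs_succ hq m hpos
  have key : |a q (m+1)| ≤ |a q m| / (4 * ((m:ℝ)+1)) := by
    rw [habs]
    have h1 : (0:ℝ) < 4 * ((m:ℝ)+1) := by positivity
    rw [div_le_div_iff₀ (by positivity) h1]
    have h0 : (0:ℝ) ≤ |a q m| := abs_nonneg _
    calc |a q m| * (4*((m:ℝ)+1)) = |a q m| * (4*((m:ℝ)+1)) * 1 := by ring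
      _ ≤ |a q m| * (4*((m:ℝ)+1)) * (1+q+(m:ℝ)) :=
          mul_le_mul_of_nonneg_left hge1 (by positivity)
      _ = |a q m| * (4 * ((m:ℝ) + 1) * (1 + q + (m:ℝ))) := by ring
  -- now the main estimate
  have hRpos : (0:ℝ) < R := lt_of_lt_of_le one_pos hR
  have habsn : (0:ℝ) ≤ ((n:ℝ)+1)^d * |a q m| * R^n := by positivity
  have hterm : ‖(((n:ℝ)+1)+1)^d * |a q (m+1)| * R^(n+1)‖
      ≤ 1/2 * ‖((n:ℝ)+1)^d * |a q m| * R^n‖ := by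
    rw [Real.norm_eq_abs, Real.norm_eq_abs, abs_of_nonneg (by positivity),
      abs_of_nonneg habsn]
    have h2d : (((n:ℝ)+1)+1)^d ≤ 2^d * ((n:ℝ)+1)^d := by
      rw [← mul_pow]
      apply pow_le_pow_left₀ (by positivity)
      nlinarith
    have hfrac : |a q (m+1)| * R ≤ 1/2 / 2^d * |a q m| := by
      have h1 : |a q m| / (4 * ((m:ℝ)+1)) * R ≤ 1/2 / 2^d * |a q m| := by
        rw [div_mul_eq_mul_div, div_le_iff₀ (by positivity)]
        have hnm : (n:ℝ) ≤ (m:ℝ) := by rw [hmcast]; linarith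
        have hRN : (2:ℝ)^d * R ≤ 2 * ((m:ℝ)+1) := by
          have : (2:ℝ)^d * R / 2 ≤ (N₂:ℝ) := hN₂
          nlinarith
        have h2dpos : (0:ℝ) < (2:ℝ)^d := by positivity
        have h0 : (0:ℝ) ≤ |a q m| := abs_nonneg _
        have e : 1/2 / 2^d * |a q m| * (4*((m:ℝ)+1)) = |a q m| * (2*((m:ℝ)+1)) / 2^d := by
          field_simp; ring
        rw [e, le_div_iff₀ h2dpos]
        calc |a q m| * R * 2^d = |a q m| * (2^d * R) := by ring
          _ ≤ |a q m| * (2*((m:ℝ)+1)) := mul_le_mul_of_nonneg_left hRN h0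
      calc |a q (m+1)| * R ≤ |a q m| / (4 * ((m:ℝ)+1)) * R := by
            apply mul_le_mul_of_nonneg_right key hRpos.le
        _ ≤ 1/2 / 2^d * |a q m| := h1
    calc (((n:ℝ)+1)+1)^d * |a q (m+1)| * R^(n+1)
        = (((n:ℝ)+1)+1)^d * (|a q (m+1)| * R) * R^n := by rw [pow_succ]; ring
      _ ≤ (2^d * ((n:ℝ)+1)^d) * (1/2 / 2^d * |a q m|) * R^n := by
          apply mul_le_mul_of_nonneg_right _ (by positivity)
          apply mul_le_mul h2d hfrac (by positivity) (by positivity)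
      _ = 1/2 * (((n:ℝ)+1)^d * |a q m| * R^n) := by
          field_simp
  have hmsucc : n + 1 + j = m + 1 := by omega
  rw [hmsucc]
  push_cast
  exact hterm


lemma summable_of_bound {q : ℝ} (hq : OK q) (j d : ℕ) (C : ℝ) {f : ℕ → ℝ} {R : ℝ} (hR : 1 ≤ R)
    (hf : ∀ n : ℕ, |f n| ≤ C * (((n:ℝ)+1)^d * |a q (n+j)| * R^n)) : Summable f :=
  Summable.of_norm_bounded ((summable_master hq j d hR).mul_left C) hf

lemma abs_pow_le {y : ℝ} (n : ℕ) : |y|^n ≤ (|y|+1)^n :=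
  pow_le_pow_left₀ (abs_nonneg y) (by linarith) n

noncomputable def g (q y : ℝ) : ℝ := ∑' n : ℕ, a q n * y^n
noncomputable def g1 (q y : ℝ) : ℝ := ∑' n : ℕ, ((n:ℝ)+1) * a q (n+1) * y^n
noncomputable def g2 (q y : ℝ) : ℝ := ∑' n : ℕ, ((n:ℝ)+2) * ((n:ℝ)+1) * a q (n+2) * y^n

lemma hR1 (y : ℝ) : 1 ≤ |y| + 1 := by linarith [abs_nonneg y]

lemma summable_g {q : ℝ} (hq : OK q) (y : ℝ) : Summable (fun n : ℕ => a q n * y^n) := by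
  apply summable_of_bound hq 0 0 1 (hR1 y)
  intro n
  rw [abs_mul, abs_pow]
  simp only [pow_zero, one_mul, Nat.add_zero]
  calc |a q n| * |y|^n ≤ |a q n| * (|y|+1)^n :=
        mul_le_mul_of_nonneg_left (abs_pow_le n) (abs_nonneg _)

lemma summable_g1 {q : ℝ} (hq : OK q) (y : ℝ) :
    Summable (fun n : ℕ => ((n:ℝ)+1) * a q (n+1) * y^n) := by
  apply summable_of_bound hq 1 1 1 (hR1 y)
  intro n
  rw [abs_mul, abs_mul, abs_pow, abs_of_nonneg (by positivity : (0:ℝ) ≤ (n:ℝ)+1)]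
  rw [one_mul, pow_one]
  exact mul_le_mul_of_nonneg_left (abs_pow_le n) (by positivity)

lemma summable_g2 {q : ℝ} (hq : OK q) (y : ℝ) :
    Summable (fun n : ℕ => ((n:ℝ)+2) * ((n:ℝ)+1) * a q (n+2) * y^n) := by
  apply summable_of_bound hq 2 2 2 (hR1 y)
  intro n
  rw [abs_mul, abs_mul, abs_mul, abs_pow,
    abs_of_nonneg (by positivity : (0:ℝ) ≤ (n:ℝ)+2),
    abs_of_nonneg (by positivity : (0:ℝ) ≤ (n:ℝ)+1)]
  have h1 : ((n:ℝ)+2) * ((n:ℝ)+1) ≤ 2 * ((n:ℝ)+1)^2 := by nlinarith [Nat.cast_nonneg (α := ℝ) n]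
  calc ((n:ℝ)+2) * ((n:ℝ)+1) * |a q (n+2)| * |y|^n
      ≤ ((n:ℝ)+2) * ((n:ℝ)+1) * |a q (n+2)| * (|y|+1)^n := by
        exact mul_le_mul_of_nonneg_left (abs_pow_le n) (by positivity)
    _ ≤ 2 * ((n:ℝ)+1)^2 * |a q (n+2)| * (|y|+1)^n := by
        apply mul_le_mul_of_nonneg_right _ (by positivity)
        exact mul_le_mul_of_nonneg_right h1 (abs_nonneg _)
    _ = 2 * (((n:ℝ)+1)^2 * |a q (n+2)| * (|y|+1)^n) := by ring

lemma hasDerivAt_series (b : ℕ → ℝ)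
    (hb : ∀ R : ℝ, 1 ≤ R → Summable (fun n : ℕ => ((n:ℝ)+1)^2 * |b n| * R^n)) (y : ℝ) :
    HasDerivAt (fun x => ∑' n : ℕ, b n * x^n) (∑' n : ℕ, ((n:ℝ)+1) * b (n+1) * y^n) y := by
  set R : ℝ := |y| + 1 with hRdef
  have hR : 1 ≤ R := hR1 y
  have hy : y ∈ Set.Ioo (-R) R := by
    constructor
    · have := neg_abs_le y; simp only [hRdef]; linarith
    · have := le_abs_self y; simp only [hRdef]; linarith
  have hu := hb R hR
  have hbound : ∀ (n : ℕ), ∀ x ∈ Set.Ioo (-R) R,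
      ‖b n * ((n:ℝ) * x^(n-1))‖ ≤ ((n:ℝ)+1)^2 * |b n| * R^n := by
    intro n x hx
    have hxR : |x| ≤ R := by
      rw [abs_le]; exact ⟨hx.1.le, hx.2.le⟩
    rw [Real.norm_eq_abs, abs_mul, abs_mul, abs_pow, Nat.abs_cast]
    match n with
    | 0 => simp
    | (m+1) =>
      simp only [Nat.add_sub_cancel]
      have h1 : |x|^m ≤ R^(m+1) := by
        calc |x|^m ≤ R^m := pow_le_pow_left₀ (abs_nonneg x) hxR m
          _ ≤ R^(m+1) := pow_le_pow_right₀ (by linarith) (Nat.le_succ m)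
      have h2 : ((m+1:ℕ):ℝ) ≤ (((m:ℝ)+1)+1)^2 := by push_cast; nlinarith [Nat.cast_nonneg (α := ℝ) m]
      have h4 : ((m+1:ℕ):ℝ) * |x|^m ≤ (((m:ℝ)+1)+1)^2 * R^(m+1) :=
        mul_le_mul h2 h1 (by positivity) (by positivity)
      calc |b (m+1)| * (((m+1:ℕ):ℝ) * |x|^m)
          ≤ |b (m+1)| * ((((m:ℝ)+1)+1)^2 * R^(m+1)) :=
            mul_le_mul_of_nonneg_left h4 (abs_nonneg _)
        _ = (((m+1:ℕ):ℝ)+1)^2 * |b (m+1)| * R^(m+1) := by push_cast; ring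
  have hsum0 : Summable (fun n : ℕ => b n * y^n) := by
    apply Summable.of_norm_bounded hu
    intro n
    rw [Real.norm_eq_abs, abs_mul, abs_pow]
    calc |b n| * |y|^n ≤ |b n| * R^n :=
          mul_le_mul_of_nonneg_left (abs_pow_le n) (abs_nonneg _)
      _ ≤ ((n:ℝ)+1)^2 * |b n| * R^n := by
          apply mul_le_mul_of_nonneg_right _ (by positivity)
          have h1 : (1:ℝ) ≤ ((n:ℝ)+1)^2 := by nlinarith [Nat.cast_nonneg (α := ℝ) n]
          nlinarith [mul_le_mul_of_nonneg_right h1 (abs_nonneg (b n))]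
  have main : HasDerivAt (fun x => ∑' n : ℕ, b n * x^n)
      (∑' n : ℕ, b n * ((n:ℝ) * y^(n-1))) y := by
    apply hasDerivAt_tsum_of_isPreconnected hu isOpen_Ioo
      (isPreconnected_Ioo)
      (fun n x _ => (hasDerivAt_pow n x).const_mul (b n)) hbound hy hsum0 hy
  have hs : Summable (fun n : ℕ => b n * ((n:ℝ) * y^(n-1))) := by
    apply Summable.of_norm_bounded hu
    intro n
    exact hbound n y hy
  have hre : (∑' n : ℕ, b n * ((n:ℝ) * y^(n-1)))
      = ∑' n : ℕ, ((n:ℝ)+1) * b (n+1) * y^n := by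
    rw [Summable.tsum_eq_zero_add hs]
    have h0 : b 0 * (((0:ℕ):ℝ) * y^(0-1)) = 0 := by norm_num
    rw [h0, zero_add]
    apply tsum_congr
    intro n
    push_cast
    ring
  rw [← hre]
  exact main

lemma hasDerivAt_g {q : ℝ} (hq : OK q) (y : ℝ) : HasDerivAt (g q) (g1 q y) y := by
  have h := hasDerivAt_series (fun n => a q n) (fun R hR => by
    simpa using summable_master hq 0 2 hR) y
  exact h

lemma hasDerivAt_g1 {q : ℝ} (hq : OK q) (y : ℝ) : HasDerivAt (g1 q) (g2 q y) y := by
  have h := hasDerivAt_series (fun n => ((n:ℝ)+1) * a q (n+1)) (fun R hR => by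
    apply ((summable_master hq 1 3 hR).congr)
    intro n
    rw [abs_mul, abs_of_nonneg (by positivity : (0:ℝ) ≤ (n:ℝ)+1)]
    ring) y
  have : (∑' n : ℕ, ((n:ℝ)+1) * (((n:ℝ)+1+1) * a q (n+1+1)) * y^n) = g2 q y := by
    apply tsum_congr; intro n
    ring_nf
  have h' : HasDerivAt (fun x => ∑' n : ℕ, ((n:ℝ)+1) * a q (n+1) * x^n) (g2 q y) y := by
    simpa [this] using h
  exact h'

lemma key_identity {q : ℝ} (hq : OK q) (y : ℝ) :
    4*y*g2 q y + (4*q+4)*g1 q y + g q y = 0 := by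
  have hT : Summable (fun n : ℕ => 4*((n:ℝ)+1)*(n:ℝ)*a q (n+1) * y^n) := by
    apply summable_of_bound hq 1 2 4 (hR1 y)
    intro n
    rw [abs_mul, abs_mul, abs_mul, abs_mul, abs_pow]
    rw [abs_of_nonneg (by positivity : (0:ℝ) ≤ (n:ℝ)+1), Nat.abs_cast,
      abs_of_nonneg (by norm_num : (0:ℝ) ≤ (4:ℝ))]
    have h1 : (4:ℝ)*((n:ℝ)+1)*(n:ℝ) ≤ 4*((n:ℝ)+1)^2 := by nlinarith [Nat.cast_nonneg (α := ℝ) n]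
    calc 4*((n:ℝ)+1)*(n:ℝ)* |a q (n+1)| * |y|^n
        ≤ 4*((n:ℝ)+1)*(n:ℝ)* |a q (n+1)| *(|y|+1)^n := by
          apply mul_le_mul_of_nonneg_left (abs_pow_le n) (by positivity)
      _ ≤ 4*((n:ℝ)+1)^2* |a q (n+1)| *(|y|+1)^n := by
          apply mul_le_mul_of_nonneg_right _ (by positivity)
          exact mul_le_mul_of_nonneg_right h1 (abs_nonneg _)
      _ = 4 * (((n:ℝ)+1)^2* |a q (n+1)| *(|y|+1)^n) := by ring
  have h4 : 4*y*g2 q y = ∑' n : ℕ, 4*((n:ℝ)+1)*(n:ℝ)*a q (n+1) * y^n := by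
    rw [Summable.tsum_eq_zero_add hT]
    have h0 : 4*(((0:ℕ):ℝ)+1)*((0:ℕ):ℝ)*a q (0+1) * y^0 = 0 := by norm_num
    rw [h0, zero_add]
    simp only [g2]
    rw [← tsum_mul_left]
    apply tsum_congr
    intro n
    push_cast
    rw [pow_succ]
    ring
  have hg1s := summable_g1 hq y
  have hgs := summable_g hq y
  have hms : Summable (fun n : ℕ => (4*q+4) * (((n:ℝ)+1)*a q (n+1)*y^n)) := by
    apply Summable.mul_left
    exact hg1s.congr (fun n => by ring)
  rw [h4]
  rw [show (4*q+4)*g1 q y = ∑' n : ℕ, (4*q+4)*(((n:ℝ)+1)*a q (n+1)*y^n) from by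
    simp only [g1]; rw [← tsum_mul_left]]
  rw [show g q y = ∑' n : ℕ, a q n * y^n from rfl]
  rw [← Summable.tsum_add hT hms, ← Summable.tsum_add (hT.add hms) hgs]
  have hzero : ∀ n : ℕ, (4*((n:ℝ)+1)*(n:ℝ)*a q (n+1) * y^n
      + (4*q+4)*(((n:ℝ)+1)*a q (n+1)*y^n) + a q n * y^n) = 0 := by
    intro n
    have hr := a_recur hq n
    linear_combination y^n * hr
  calc (∑' n : ℕ, (4*((n:ℝ)+1)*(n:ℝ)*a q (n+1) * y^n
      + (4*q+4)*(((n:ℝ)+1)*a q (n+1)*y^n) + a q n * y^n)) = ∑' _ : ℕ, (0:ℝ) :=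
        tsum_congr hzero
    _ = 0 := tsum_zero

lemma series_eq (q x : ℝ) :
    (∑' n : ℕ, (-1:ℝ)^n * x^(2*n) / (2^(2*n) * poch (1+q) n * (n.factorial : ℝ)))
      = g q (x^2) := by
  simp only [g]
  apply tsum_congr
  intro n
  have h2 : (2:ℝ)^(2*n) = 4^n := by rw [pow_mul]; norm_num
  rw [h2, pow_mul, a]
  ring

lemma besselJ_eq (q : ℝ) :
    besselJ q = fun x => x ^ q * g q (x^2) / ((2:ℝ)^q * Real.Gamma (1+q)) := by
  funext x
  unfold besselJ
  rw [series_eq q x]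
  ring

noncomputable def Dq (q : ℝ) : ℝ := (2:ℝ)^q * Real.Gamma (1+q)

noncomputable def J1 (q x : ℝ) : ℝ :=
  (q * x^(q-1) * g q (x^2) + x^q * (g1 q (x^2) * (2*x))) / Dq q

noncomputable def J2 (q x : ℝ) : ℝ :=
  ((q * ((q-1) * x^(q-1-1)) * g q (x^2) + q * x^(q-1) * (g1 q (x^2) * (2*x)))
    + (q * x^(q-1) * (g1 q (x^2) * (2*x))
       + x^q * (g2 q (x^2) * (2*x) * (2*x) + g1 q (x^2) * 2))) / Dq q

lemma hasDerivAt_gcomp {q : ℝ} (hq : OK q) (x : ℝ) :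
    HasDerivAt (fun x : ℝ => g q (x^2)) (g1 q (x^2) * (2*x)) x := by
  have h := (hasDerivAt_g hq (x^2)).comp x ((hasDerivAt_pow 2 x))
  have h' : HasDerivAt (g q ∘ fun x : ℝ => x^2) (g1 q (x^2) * (2*x)) x := by simpa using h
  exact h'

lemma hasDerivAt_g1comp {q : ℝ} (hq : OK q) (x : ℝ) :
    HasDerivAt (fun x : ℝ => g1 q (x^2)) (g2 q (x^2) * (2*x)) x := by
  have h := (hasDerivAt_g1 hq (x^2)).comp x ((hasDerivAt_pow 2 x))
  have h' : HasDerivAt (g1 q ∘ fun x : ℝ => x^2) (g2 q (x^2) * (2*x)) x := by simpa using h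
  exact h'

lemma hasDerivAt_J {q : ℝ} (hq : OK q) {x : ℝ} (hx : 0 < x) :
    HasDerivAt (besselJ q) (J1 q x) x := by
  rw [besselJ_eq]
  have h1 : HasDerivAt (fun x : ℝ => x ^ q) (q * x^(q-1)) x :=
    Real.hasDerivAt_rpow_const (Or.inl hx.ne')
  have h2 := hasDerivAt_gcomp hq x
  exact (h1.mul h2).div_const (Dq q)

lemma hasDerivAt_J1 {q : ℝ} (hq : OK q) {x : ℝ} (hx : 0 < x) :
    HasDerivAt (fun y => J1 q y) (J2 q x) x := by
  have hA : HasDerivAt (fun x : ℝ => q * x^(q-1)) (q * ((q-1) * x^(q-1-1))) x :=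
    (Real.hasDerivAt_rpow_const (p := q-1) (Or.inl hx.ne')).const_mul q
  have hB : HasDerivAt (fun x : ℝ => x ^ q) (q * x^(q-1)) x :=
    Real.hasDerivAt_rpow_const (Or.inl hx.ne')
  have hg := hasDerivAt_gcomp hq x
  have hg1 := hasDerivAt_g1comp hq x
  have hlin : HasDerivAt (fun x : ℝ => 2*x) (2:ℝ) x := by
    simpa using (hasDerivAt_id x).const_mul (2:ℝ)
  have hC : HasDerivAt (fun x : ℝ => g1 q (x^2) * (2*x))
      (g2 q (x^2) * (2*x) * (2*x) + g1 q (x^2) * 2) x := hg1.mul hlin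
  have := ((hA.mul hg).add (hB.mul hC)).div_const (Dq q)
  exact this

lemma deriv_besselJ {q : ℝ} (hq : OK q) {x : ℝ} (hx : 0 < x) :
    deriv (besselJ q) x = J1 q x := (hasDerivAt_J hq hx).deriv

lemma deriv_besselJ_eventually {q : ℝ} (hq : OK q) {x : ℝ} (hx : 0 < x) :
    deriv (besselJ q) =ᶠ[nhds x] fun y => J1 q y := by
  filter_upwards [isOpen_Ioi.mem_nhds (Set.mem_Ioi.2 hx)] with y hy
  exact deriv_besselJ hq hy

lemma deriv2_besselJ {q : ℝ} (hq : OK q) {x : ℝ} (hx : 0 < x) :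
    deriv (deriv (besselJ q)) x = J2 q x := by
  rw [Filter.EventuallyEq.deriv_eq (deriv_besselJ_eventually hq hx)]
  exact (hasDerivAt_J1 hq hx).deriv

lemma differentiable_deriv_besselJ {q : ℝ} (hq : OK q) {x : ℝ} (hx : 0 < x) :
    DifferentiableAt ℝ (deriv (besselJ q)) x := by
  rw [Filter.EventuallyEq.differentiableAt_iff (deriv_besselJ_eventually hq hx)]
  exact (hasDerivAt_J1 hq hx).differentiableAt

lemma ode {q pp : ℝ} (hq : OK q) (hqp : q^2 = pp^2) {x : ℝ} (hx : 0 < x) :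
    x^2 * J2 q x + x * J1 q x + (x^2 - pp^2) * besselJ q x = 0 := by
  have hk := key_identity hq (x^2)
  rw [besselJ_eq, show (2:ℝ)^q * Real.Gamma (1+q) = Dq q from rfl]
  simp only [J1, J2]
  have hxne : x ≠ 0 := hx.ne'
  have f1 : x^q = x^(q-1) * x := by
    rw [Real.rpow_sub hx, Real.rpow_one, div_mul_cancel₀ _ hxne]
  have f2 : x^(q-1) = x^(q-1-1) * x := by
    rw [Real.rpow_sub hx (q-1), Real.rpow_one, div_mul_cancel₀ _ hxne]
  rw [f1, f2]
  linear_combination (x^(q-1-1) * x^4 / Dq q) * hk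
    + (x^(q-1-1) * x^2 * g q (x^2) / Dq q) * hqp

lemma g_zero (q : ℝ) : g q 0 = 1 := by
  rw [g, tsum_eq_single 0 ?_]
  · simp [a, poch]
  · intro n hn
    cases n with
    | zero => exact absurd rfl hn
    | succ m => simp

lemma summable_bessel_series {q : ℝ} (hq : OK q) (x : ℝ) :
    Summable (fun n : ℕ => (-1:ℝ)^n * x^(2*n) / (2^(2*n) * poch (1+q) n * (n.factorial : ℝ))) := by
  apply (summable_g hq (x^2)).congr
  intro n
  have h2 : (2:ℝ)^(2*n) = 4^n := by rw [pow_mul]; norm_num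
  rw [h2, pow_mul, a]
  ring

lemma Dq_ne {q : ℝ} (h : ∀ m : ℕ, 1 + q ≠ -(m:ℝ)) : Dq q ≠ 0 :=
  mul_ne_zero (Real.rpow_pos_of_pos two_pos q).ne' (Real.Gamma_ne_zero h)

lemma tendsto_gcomp {q : ℝ} (hq : OK q) :
    Filter.Tendsto (fun x : ℝ => g q (x^2)) (nhdsWithin 0 (Set.Ioi 0)) (nhds 1) := by
  have h := (hasDerivAt_gcomp hq 0).continuousAt.tendsto
  have e : g q ((0:ℝ)^2) = 1 := by
    rw [show ((0:ℝ)^2) = (0:ℝ) by norm_num, g_zero]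
  rw [e] at h
  exact h.mono_left nhdsWithin_le_nhds

lemma tendsto_rpow_zero {c : ℝ} (hc : 0 < c) :
    Filter.Tendsto (fun x : ℝ => x ^ c) (nhdsWithin 0 (Set.Ioi 0)) (nhds 0) := by
  have h := (Real.continuousAt_rpow_const 0 c (Or.inr hc.le)).tendsto
  rw [Real.zero_rpow hc.ne'] at h
  exact h.mono_left nhdsWithin_le_nhds

lemma besselJ_apply (q x : ℝ) : besselJ q x = x ^ q * g q (x^2) / Dq q :=
  congrFun (besselJ_eq q) x

end BJ

theorem besselJ_pm_p_solutions
    (p : ℝ) (hp : 0 < p) (hint : ∀ k : ℤ, 2 * p ≠ (k : ℝ)) :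
    (∀ x ∈ Set.Ioi (0 : ℝ),
      (Summable fun n : ℕ => (-1 : ℝ) ^ n * x ^ (2 * n) /
        (2 ^ (2 * n) * poch (1 + p) n * (n.factorial : ℝ))) ∧
      (Summable fun n : ℕ => (-1 : ℝ) ^ n * x ^ (2 * n) /
        (2 ^ (2 * n) * poch (1 - p) n * (n.factorial : ℝ)))) ∧
    (∀ x ∈ Set.Ioi (0 : ℝ),
      DifferentiableAt ℝ (besselJ p) x ∧ DifferentiableAt ℝ (deriv (besselJ p)) x ∧
      DifferentiableAt ℝ (besselJ (-p)) x ∧ DifferentiableAt ℝ (deriv (besselJ (-p))) x) ∧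
    (∀ x ∈ Set.Ioi (0 : ℝ),
      x ^ 2 * deriv (deriv (besselJ p)) x + x * deriv (besselJ p) x
        + (x ^ 2 - p ^ 2) * besselJ p x = 0 ∧
      x ^ 2 * deriv (deriv (besselJ (-p))) x + x * deriv (besselJ (-p)) x
        + (x ^ 2 - p ^ 2) * besselJ (-p) x = 0) ∧
    (∀ a b : ℝ, (∀ x ∈ Set.Ioi (0 : ℝ), a * besselJ p x + b * besselJ (-p) x = 0) →
      a = 0 ∧ b = 0) := by
  have hOKp : BJ.OK p := by
    intro i
    have := Nat.cast_nonneg (α := ℝ) i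
    intro h; linarith
  have hOKn : BJ.OK (-p) := by
    intro i h
    exact hint (2*(i+1)) (by push_cast; linarith)
  have hq2 : (-p)^2 = p^2 := by ring
  have hDp : BJ.Dq p ≠ 0 := BJ.Dq_ne (fun m => by
    have := Nat.cast_nonneg (α := ℝ) m
    intro h; linarith)
  have hDn : BJ.Dq (-p) ≠ 0 := BJ.Dq_ne (fun m => by
    intro h
    exact hint (2*(m+1)) (by push_cast; linarith))
  refine ⟨?_, ?_, ?_, ?_⟩
  · intro x _
    refine ⟨BJ.summable_bessel_series hOKp x, ?_⟩
    have e : (1:ℝ) - p = 1 + (-p) := by ring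
    rw [e]
    exact BJ.summable_bessel_series hOKn x
  · intro x hx
    have hx' : (0:ℝ) < x := hx
    exact ⟨(BJ.hasDerivAt_J hOKp hx').differentiableAt,
      BJ.differentiable_deriv_besselJ hOKp hx',
      (BJ.hasDerivAt_J hOKn hx').differentiableAt,
      BJ.differentiable_deriv_besselJ hOKn hx'⟩
  · intro x hx
    have hx' : (0:ℝ) < x := hx
    constructor
    · rw [BJ.deriv2_besselJ hOKp hx', BJ.deriv_besselJ hOKp hx']
      exact BJ.ode hOKp rfl hx'
    · rw [BJ.deriv2_besselJ hOKn hx', BJ.deriv_besselJ hOKn hx']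
      exact BJ.ode hOKn hq2 hx'
  · intro aa bb hzero
    have hge : ∀ x ∈ Set.Ioi (0:ℝ),
        aa * (x^(2*p) * BJ.g p (x^2) / BJ.Dq p) + bb * (BJ.g (-p) (x^2) / BJ.Dq (-p)) = 0 := by
      intro x hx
      have hx' : (0:ℝ) < x := hx
      have h1 : x^p * besselJ p x = x^(2*p) * BJ.g p (x^2) / BJ.Dq p := by
        rw [BJ.besselJ_apply, show x^(2*p) = x^p * x^p from by rw [two_mul, Real.rpow_add hx']]
        ring
      have h2 : x^p * besselJ (-p) x = BJ.g (-p) (x^2) / BJ.Dq (-p) := by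
        rw [BJ.besselJ_apply,
          show x^p * (x^(-p) * BJ.g (-p) (x^2) / BJ.Dq (-p))
            = (x^p * x^(-p)) * BJ.g (-p) (x^2) / BJ.Dq (-p) from by ring,
          ← Real.rpow_add hx', add_neg_cancel, Real.rpow_zero, one_mul]
      calc aa * (x^(2*p) * BJ.g p (x^2) / BJ.Dq p) + bb * (BJ.g (-p) (x^2) / BJ.Dq (-p))
          = x^p * (aa * besselJ p x + bb * besselJ (-p) x) := by
            rw [← h1, ← h2]; ring
        _ = 0 := by rw [hzero x hx, mul_zero]
    have hT1 : Filter.Tendsto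
        (fun x : ℝ => aa * (x^(2*p) * BJ.g p (x^2) / BJ.Dq p) + bb * (BJ.g (-p) (x^2) / BJ.Dq (-p)))
        (nhdsWithin 0 (Set.Ioi 0)) (nhds (aa * ((0:ℝ) * 1 / BJ.Dq p) + bb * (1 / BJ.Dq (-p)))) := by
      apply Filter.Tendsto.add
      · exact (((BJ.tendsto_rpow_zero (by positivity)).mul (BJ.tendsto_gcomp hOKp)).div_const _).const_mul aa
      · have h1 : Filter.Tendsto (fun x : ℝ => (1:ℝ)) (nhdsWithin 0 (Set.Ioi 0)) (nhds 1) :=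
          tendsto_const_nhds
        exact ((BJ.tendsto_gcomp hOKn).div_const _).const_mul bb
    have hT2 : Filter.Tendsto
        (fun x : ℝ => aa * (x^(2*p) * BJ.g p (x^2) / BJ.Dq p) + bb * (BJ.g (-p) (x^2) / BJ.Dq (-p)))
        (nhdsWithin 0 (Set.Ioi 0)) (nhds 0) := by
      apply Filter.Tendsto.congr' _ tendsto_const_nhds
      filter_upwards [self_mem_nhdsWithin] with x hx
      exact (hge x hx).symm
    have hlim := tendsto_nhds_unique hT1 hT2
    have hbb : bb = 0 := by
      simp only [zero_mul, zero_div, mul_zero, zero_add, mul_one] at hlim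
      rcases mul_eq_zero.1 hlim with h | h
      · exact h
      · exact absurd h (one_div_ne_zero hDn)
    refine ⟨?_, hbb⟩
    have hzp : ∀ x ∈ Set.Ioi (0:ℝ), aa * besselJ p x = 0 := by
      intro x hx
      have := hzero x hx
      rw [hbb, zero_mul, add_zero] at this
      exact this
    have hge2 : ∀ x ∈ Set.Ioi (0:ℝ), aa * (BJ.g p (x^2) / BJ.Dq p) = 0 := by
      intro x hx
      have hx' : (0:ℝ) < x := hx
      have h1 : x^(-p) * (aa * besselJ p x) = aa * (BJ.g p (x^2) / BJ.Dq p) := by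
        rw [BJ.besselJ_apply,
          show x^(-p) * (aa * (x^p * BJ.g p (x^2) / BJ.Dq p))
            = aa * ((x^(-p) * x^p) * BJ.g p (x^2) / BJ.Dq p) from by ring,
          ← Real.rpow_add hx', neg_add_cancel, Real.rpow_zero, one_mul]
      rw [← h1, hzp x hx, mul_zero]
    have hS1 : Filter.Tendsto (fun x : ℝ => aa * (BJ.g p (x^2) / BJ.Dq p))
        (nhdsWithin 0 (Set.Ioi 0)) (nhds (aa * (1 / BJ.Dq p))) :=
      ((BJ.tendsto_gcomp hOKp).div_const _).const_mul aa
    have hS2 : Filter.Tendsto (fun x : ℝ => aa * (BJ.g p (x^2) / BJ.Dq p))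
        (nhdsWithin 0 (Set.Ioi 0)) (nhds 0) := by
      apply Filter.Tendsto.congr' _ tendsto_const_nhds
      filter_upwards [self_mem_nhdsWithin] with x hx
      exact (hge2 x hx).symm
    have hlim2 := tendsto_nhds_unique hS1 hS2
    rcases mul_eq_zero.1 hlim2 with h | h
    · exact h
    · exact absurd h (one_div_ne_zero hDp)
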